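/- If the representation is regular and R^∞(V) reduces it (i.e. R^∞(V) is invariant under every V_i and under every V_i*), then the representation is bi-regular with respect to the Moore–Penrose inverse Ṽ†: that is, ker(I_E ⊗ Ṽ†^(n)) ⊆ ran(Ṽ†) for every n ≥ 1 (note Ṽ† is a generalized inverse of Ṽ). -/

import Mathlib

open scoped InnerProductSpace

noncomputable section

variable (H : Type) [NormedAddCommGroup H] [InnerProductSpace ℂ H]

/-- Words of length `n` in the alphabet `{1,…,d}`. -/
abbrev Word (d n : ℕ) := Fin n → Fin d

/-- `H_n`: the ℓ²-direct sum of copies of `H` indexed by words of length `n`. -/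
abbrev Hn (d n : ℕ) := PiLp 2 (fun _ : Word d n => H)

instance instHnCompleteSpace [CompleteSpace H] (d n : ℕ) : CompleteSpace (Hn H d n) :=
  ((PiLp.continuousLinearEquiv 2 ℂ (fun _ : Word d n => H)).isUniformEmbedding.completeSpace_congr
    (PiLp.continuousLinearEquiv 2 ℂ (fun _ : Word d n => H)).surjective).mpr inferInstance

/-- The coordinate projection `H_m → H` at the word `α`. -/
def coord (d m : ℕ) (α : Word d m) : Hn H d m →L[ℂ] H :=
  PiLp.proj 2 (fun _ : Word d m => H) α

/-- The embedding `H → H_n` into the coordinate at the word `α`. -/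
def singleCLM (d n : ℕ) (α : Word d n) : H →L[ℂ] Hn H d n :=
  ((PiLp.continuousLinearEquiv 2 ℂ (fun _ : Word d n => H)).symm.toContinuousLinearMap).comp
    (ContinuousLinearMap.pi (fun β : Word d n =>
      if β = α then ContinuousLinearMap.id ℂ H else 0))

/-- `V_α := V_{α_1} ∘ ⋯ ∘ V_{α_n}` for a word `α`. -/
def Vword {d : ℕ} (V : Fin d → H →L[ℂ] H) : (n : ℕ) → Word d n → (H →L[ℂ] H)
  | 0, _ => ContinuousLinearMap.id ℂ H
  | (n + 1), α => (V (α 0)).comp (Vword V n (fun i => α i.succ))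

/-- `Ṽ_n : H_n → H`, `Ṽ_n((h_α)_α) = Σ_α V_α h_α`. -/
def Vtilde {d : ℕ} (V : Fin d → H →L[ℂ] H) (n : ℕ) : Hn H d n →L[ℂ] H :=
  ∑ α : Word d n, (Vword H V n α).comp (coord H d n α)

/-- Extraction of the `α`-block: `H_{n+j} → H_j`. -/
def blockIn (d n j : ℕ) (α : Word d n) : Hn H d (n + j) →L[ℂ] Hn H d j :=
  ((PiLp.continuousLinearEquiv 2 ℂ (fun _ : Word d j => H)).symm.toContinuousLinearMap).comp
    (ContinuousLinearMap.pi (fun γ : Word d j => coord H d (n + j) (Fin.append α γ)))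

/-- Insertion of the `α`-block: `H_k → H_{n+k}`. -/
def blockOut (d n k : ℕ) (α : Word d n) : Hn H d k →L[ℂ] Hn H d (n + k) :=
  ((PiLp.continuousLinearEquiv 2 ℂ (fun _ : Word d (n + k) => H)).symm.toContinuousLinearMap).comp
    (ContinuousLinearMap.pi (fun β : Word d (n + k) =>
      if (fun i : Fin n => β (Fin.castAdd k i)) = α then
        coord H d k (fun i : Fin k => β (Fin.natAdd n i)) else 0))

/-- The amplification `I_{E^{⊗n}} ⊗ R : H_{n+j} → H_n` of a map `R : H_j → H`. -/
def ampV (d n j : ℕ) (R : Hn H d j →L[ℂ] H) : Hn H d (n + j) →L[ℂ] Hn H d n :=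
  ∑ α : Word d n, (singleCLM H d n α).comp (R.comp (blockIn H d n j α))

/-- The amplification `I_{E^{⊗n}} ⊗ S : H_n → H_{n+k}` of a map `S : H → H_k`. -/
def ampS (d n k : ℕ) (S : H →L[ℂ] Hn H d k) : Hn H d n →L[ℂ] Hn H d (n + k) :=
  ∑ α : Word d n, (blockOut H d n k α).comp (S.comp (coord H d n α))

/-- The amplification `I_{E^{⊗n}} ⊗ T : H_n → H_n` of a map `T : H → H`. -/
def ampHH (d n : ℕ) (T : H →L[ℂ] H) : Hn H d n →L[ℂ] Hn H d n :=
  ∑ α : Word d n, (singleCLM H d n α).comp (T.comp (coord H d n α))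

/-- The amplification `I_{E^{⊗n}} ⊗ R : H_{n+j} → H_{n+k}` of a map `R : H_j → H_k`. -/
def ampGen (d n j k : ℕ) (R : Hn H d j →L[ℂ] Hn H d k) :
    Hn H d (n + j) →L[ℂ] Hn H d (n + k) :=
  ∑ α : Word d n, (blockOut H d n k α).comp (R.comp (blockIn H d n j α))

/-- The iterates `S^{(n)} : H → H_n` of a map `S : H → H_1`:
`S^{(0)} = I_H` and `S^{(n+1)} = (I_{E^{⊗n}} ⊗ S) ∘ S^{(n)}`. -/
def Siter {d : ℕ} (S : H →L[ℂ] Hn H d 1) : (n : ℕ) → (H →L[ℂ] Hn H d n)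
  | 0 => singleCLM H d 0 (fun i => i.elim0)
  | (n + 1) => (ampS H d n 1 S).comp (Siter S n)

/-- The generalized range `R^∞(V) = ⋂_{n ≥ 1} ran Ṽ_n`. -/
def Rinf {d : ℕ} (V : Fin d → H →L[ℂ] H) : Submodule ℂ H :=
  ⨅ (n : ℕ) (_ : 1 ≤ n), LinearMap.range (Vtilde H V n).toLinearMap

/-- `H_n(K)`: families all of whose entries lie in `K` (realizing `E^{⊗n} ⊗ K`). -/
def HnSub (d n : ℕ) (K : Submodule ℂ H) : Submodule ℂ (Hn H d n) :=
  ⨅ α : Word d n, K.comap (coord H d n α).toLinearMap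

/-- The representation is regular: `ran Ṽ` is closed and
`ker Ṽ_n ⊆ ran (I_{E^{⊗n}} ⊗ Ṽ_m)` for all `n, m ≥ 1`. -/
def RepRegular {d : ℕ} (V : Fin d → H →L[ℂ] H) : Prop :=
  IsClosed (LinearMap.range (Vtilde H V 1).toLinearMap : Set H) ∧
    ∀ n m : ℕ, 1 ≤ n → 1 ≤ m →
      LinearMap.ker (Vtilde H V n).toLinearMap ≤ LinearMap.range (ampV H d n m (Vtilde H V m)).toLinearMap

/-- The reduced minimum modulus `γ(T)`. -/
def rmm {X Y : Type*} [NormedAddCommGroup X] [InnerProductSpace ℂ X]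
    [NormedAddCommGroup Y] [InnerProductSpace ℂ Y] (T : X →L[ℂ] Y) : ℝ :=
  sInf ((fun ξ => ‖T ξ‖ / Metric.infDist ξ (LinearMap.ker T.toLinearMap : Set X)) ''
    {ξ : X | ξ ∉ LinearMap.ker T.toLinearMap})

/-- The cast `H_m → H_k` along an equality `m = k` of word lengths. -/
def castHn (d : ℕ) {m k : ℕ} (h : m = k) : Hn H d m →L[ℂ] Hn H d k := by
  subst h; exact ContinuousLinearMap.id ℂ _

/-- `E^{⊗j} ⊙ K ⊆ H_{j+1}`: families all of whose `1`-blocks lie in `K ⊆ H_1`. -/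
def odotSub (d j : ℕ) (K : Submodule ℂ (Hn H d 1)) : Submodule ℂ (Hn H d (j + 1)) :=
  ⨅ α : Word d j, K.comap (blockIn H d j 1 α).toLinearMap

end


noncomputable section Helpers

variable {H : Type} [NormedAddCommGroup H] [InnerProductSpace ℂ H]

lemma coord_apply' (d m : ℕ) (α : Word d m) (x : Hn H d m) : coord H d m α x = x α := rfl

lemma singleCLM_apply' (d n : ℕ) (α β : Word d n) (h : H) :
    singleCLM H d n α h β = if β = α then h else 0 := by
  show (if β = α then ContinuousLinearMap.id ℂ H else 0) h = _
  split <;> simp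

lemma blockIn_apply' (d n j : ℕ) (α : Word d n) (x : Hn H d (n + j)) (γ : Word d j) :
    blockIn H d n j α x γ = x (Fin.append α γ) := rfl

lemma blockOut_apply' (d n k : ℕ) (α : Word d n) (x : Hn H d k) (β : Word d (n + k)) :
    blockOut H d n k α x β =
      if (fun i : Fin n => β (Fin.castAdd k i)) = α then
        x (fun i : Fin k => β (Fin.natAdd n i)) else 0 := by
  show (if (fun i : Fin n => β (Fin.castAdd k i)) = α then
      coord H d k (fun i : Fin k => β (Fin.natAdd n i)) else 0) x = _
  split <;> simp [coord_apply']

lemma ampS_apply' (d n k : ℕ) (S : H →L[ℂ] Hn H d k) (u : Hn H d n) (β : Word d (n + k)) :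
    ampS H d n k S u β =
      S (u (fun i : Fin n => β (Fin.castAdd k i))) (fun i : Fin k => β (Fin.natAdd n i)) := by
  have : ampS H d n k S u β =
      ∑ α : Word d n, blockOut H d n k α (S (coord H d n α u)) β := by
    rw [ampS, ContinuousLinearMap.sum_apply]
    rw [WithLp.ofLp_sum]
    exact Finset.sum_apply _ _ _
  rw [this]
  simp only [blockOut_apply', coord_apply']
  rw [Finset.sum_ite_eq Finset.univ (fun i : Fin n => β (Fin.castAdd k i))
    (fun α => S (u α) (fun i : Fin k => β (Fin.natAdd n i)))]
  simp

lemma ampS_eq_zero_iff' (d n k : ℕ) (S : H →L[ℂ] Hn H d k) (u : Hn H d n) :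
    ampS H d n k S u = 0 ↔ ∀ α : Word d n, S (u α) = 0 := by
  constructor
  · intro h0 α
    ext γ
    have := congrFun (congrArg (fun (v : Hn H d (n+k)) (β : Word d (n+k)) => v β) h0)
      (Fin.append α γ)
    simp only [ampS_apply'] at this
    have h1 : (fun i : Fin n => Fin.append α γ (Fin.castAdd k i)) = α := by
      funext i; exact Fin.append_left α γ i
    have h2 : (fun i : Fin k => Fin.append α γ (Fin.natAdd n i)) = γ := by
      funext i; exact Fin.append_right α γ i
    rw [h1, h2] at this
    exact this
  · intro h0
    ext β
    show ampS H d n k S u β = 0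
    rw [ampS_apply', h0]
    rfl

lemma ampV_apply' (d n m : ℕ) (R : Hn H d m →L[ℂ] H) (g : Hn H d (n + m)) (α : Word d n) :
    ampV H d n m R g α = R (blockIn H d n m α g) := by
  have : ampV H d n m R g α = ∑ α' : Word d n, singleCLM H d n α' (R (blockIn H d n m α' g)) α := by
    rw [ampV, ContinuousLinearMap.sum_apply]
    rw [WithLp.ofLp_sum]
    exact Finset.sum_apply _ _ _
  rw [this]
  simp only [singleCLM_apply']
  rw [Finset.sum_ite_eq Finset.univ α (fun α' => R (blockIn H d n m α' g))]
  simp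

lemma Vtilde_apply' {d : ℕ} (V : Fin d → H →L[ℂ] H) (n : ℕ) (u : Hn H d n) :
    Vtilde H V n u = ∑ α : Word d n, Vword H V n α (u α) := by
  rw [Vtilde, ContinuousLinearMap.sum_apply]
  rfl

lemma Vword_one' {d : ℕ} (V : Fin d → H →L[ℂ] H) (γ : Word d 1) (x : H) :
    Vword H V 1 γ x = V (γ 0) x := rfl

end Helpers

noncomputable section Main

variable {H : Type} [NormedAddCommGroup H] [InnerProductSpace ℂ H]

lemma mem_Rinf_iff' {d : ℕ} (V : Fin d → H →L[ℂ] H) (r : H) :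
    r ∈ Rinf H V ↔ ∀ n : ℕ, 1 ≤ n → r ∈ LinearMap.range (Vtilde H V n).toLinearMap := by
  simp [Rinf, Submodule.mem_iInf]

variable [CompleteSpace H]

/-- The key one-step fact: if all `1`-blocks of `Vdag b` are orthogonal to `R^∞(V)`,
then so is `b`. -/
lemma step_orth {d : ℕ} (V : Fin d → H →L[ℂ] H)
    (hinvstar : ∀ i : Fin d, ∀ h ∈ Rinf H V, ContinuousLinearMap.adjoint (V i) h ∈ Rinf H V)
    (Vdag : H →L[ℂ] Hn H d 1)
    (mp1 : (Vtilde H V 1).comp (Vdag.comp (Vtilde H V 1)) = Vtilde H V 1)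
    (mp3 : IsSelfAdjoint ((Vtilde H V 1).comp Vdag))
    (b : H) (hb : ∀ γ : Word d 1, ∀ r ∈ Rinf H V, ⟪Vdag b γ, r⟫_ℂ = 0) :
    ∀ r ∈ Rinf H V, ⟪b, r⟫_ℂ = 0 := by
  intro r hr
  obtain ⟨y, hy⟩ : r ∈ LinearMap.range (Vtilde H V 1).toLinearMap := (mem_Rinf_iff' V r).mp hr 1 le_rfl
  have hsym := ContinuousLinearMap.isSelfAdjoint_iff_isSymmetric.mp mp3
  have t2 : ⟪Vtilde H V 1 (Vdag b), r⟫_ℂ = 0 := by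
    rw [Vtilde_apply' V 1 (Vdag b), sum_inner]
    apply Finset.sum_eq_zero
    intro γ _
    rw [Vword_one', ← ContinuousLinearMap.adjoint_inner_right]
    exact hb γ _ (hinvstar (γ 0) r hr)
  have t1 : ⟪b - Vtilde H V 1 (Vdag b), r⟫_ℂ = 0 := by
    rw [← hy, inner_sub_left]
    have h1 : ⟪Vtilde H V 1 (Vdag b), Vtilde H V 1 y⟫_ℂ = ⟪b, Vtilde H V 1 (Vdag (Vtilde H V 1 y))⟫_ℂ :=
      hsym b (Vtilde H V 1 y)
    have h2 : Vtilde H V 1 (Vdag (Vtilde H V 1 y)) = Vtilde H V 1 y := by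
      have := congrArg (fun T : Hn H d 1 →L[ℂ] H => T y) mp1
      simpa using this
    show ⟪b, Vtilde H V 1 y⟫_ℂ - ⟪Vtilde H V 1 (Vdag b), Vtilde H V 1 y⟫_ℂ = 0
    rw [h1, h2, sub_self]
  calc ⟪b, r⟫_ℂ = ⟪b - Vtilde H V 1 (Vdag b), r⟫_ℂ + ⟪Vtilde H V 1 (Vdag b), r⟫_ℂ := by
        rw [inner_sub_left]; ring
    _ = 0 := by rw [t1, t2, add_zero]

lemma keyQ {d : ℕ} (V : Fin d → H →L[ℂ] H)
    (hinvstar : ∀ i : Fin d, ∀ h ∈ Rinf H V, ContinuousLinearMap.adjoint (V i) h ∈ Rinf H V)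
    (Vdag : H →L[ℂ] Hn H d 1)
    (mp1 : (Vtilde H V 1).comp (Vdag.comp (Vtilde H V 1)) = Vtilde H V 1)
    (mp3 : IsSelfAdjoint ((Vtilde H V 1).comp Vdag)) :
    ∀ (n : ℕ) (h : H),
      (∀ (α : Word d n), ∀ r ∈ Rinf H V, ⟪Siter H Vdag n h α, r⟫_ℂ = 0) →
      ∀ r ∈ Rinf H V, ⟪h, r⟫_ℂ = 0 := by
  intro n
  induction n with
  | zero =>
    intro h hh r hr
    have := hh (fun i => i.elim0) r hr
    have h0 : Siter H Vdag 0 h (fun i => i.elim0) = h := by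
      show singleCLM H d 0 (fun i => i.elim0) h (fun i => i.elim0) = h
      rw [singleCLM_apply', if_pos rfl]
    rwa [h0] at this
  | succ n ih =>
    intro h hh r hr
    apply ih h _ r hr
    intro α r' hr'
    apply step_orth V hinvstar Vdag mp1 mp3 (Siter H Vdag n h α) _ r' hr'
    intro γ r'' hr''
    have := hh (Fin.append α γ) r'' hr''
    have hrw : Siter H Vdag (n + 1) h (Fin.append α γ)
        = Vdag (Siter H Vdag n h α) γ := by
      show ampS H d n 1 Vdag (Siter H Vdag n h) (Fin.append α γ) = _
      rw [ampS_apply']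
      have h1 : (fun i : Fin n => Fin.append α γ (Fin.castAdd 1 i)) = α := by
        funext i; exact Fin.append_left α γ i
      have h2 : (fun i : Fin 1 => Fin.append α γ (Fin.natAdd n i)) = γ := by
        funext i; exact Fin.append_right α γ i
      rw [h1, h2]
    rwa [hrw] at this

end Main

theorem stmt_16 (H : Type) [NormedAddCommGroup H] [InnerProductSpace ℂ H] [CompleteSpace H]
    (d : ℕ) (hd : 1 ≤ d) (V : Fin d → H →L[ℂ] H)
    (hreg : RepRegular H V)
    (hinv : ∀ i : Fin d, ∀ h ∈ Rinf H V, V i h ∈ Rinf H V)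
    (hinvstar : ∀ i : Fin d, ∀ h ∈ Rinf H V, ContinuousLinearMap.adjoint (V i) h ∈ Rinf H V)
    (Vdag : H →L[ℂ] Hn H d 1)
    (mp1 : (Vtilde H V 1).comp (Vdag.comp (Vtilde H V 1)) = Vtilde H V 1)
    (mp2 : Vdag.comp ((Vtilde H V 1).comp Vdag) = Vdag)
    (mp3 : IsSelfAdjoint ((Vtilde H V 1).comp Vdag))
    (mp4 : IsSelfAdjoint (Vdag.comp (Vtilde H V 1))) :
    ∀ n : ℕ, 1 ≤ n →
      LinearMap.ker (ampS H d 1 n (Siter H Vdag n)).toLinearMap ≤ LinearMap.range Vdag.toLinearMap := by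
  intro n hn x hx
  have hx0 : ampS H d 1 n (Siter H Vdag n) x = 0 := hx
  have hxblocks : ∀ α : Word d 1, Siter H Vdag n (x α) = 0 :=
    (ampS_eq_zero_iff' d 1 n (Siter H Vdag n) x).mp hx0
  -- each coordinate of x is orthogonal to R^∞(V)
  have hxi : ∀ (α : Word d 1), ∀ r ∈ Rinf H V, ⟪x α, r⟫_ℂ = 0 := by
    intro α
    apply keyQ V hinvstar Vdag mp1 mp3 n (x α)
    intro γ r hr
    rw [hxblocks α]
    show ⟪(0 : H), r⟫_ℂ = 0
    exact inner_zero_left r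
  -- the defect e := x - Vdag (Ṽ x) lies in ker Ṽ
  set e : Hn H d 1 := x - Vdag (Vtilde H V 1 x) with he
  have hVe : Vtilde H V 1 e = 0 := by
    have h2 : Vtilde H V 1 (Vdag (Vtilde H V 1 x)) = Vtilde H V 1 x := by
      have := congrArg (fun T : Hn H d 1 →L[ℂ] H => T x) mp1
      simpa using this
    rw [he, map_sub, h2, sub_self]
  -- coordinates of e lie in R^∞(V) by regularity
  have heR : ∀ α : Word d 1, e α ∈ Rinf H V := by
    intro α
    rw [mem_Rinf_iff']
    intro m hm
    obtain ⟨g, hg⟩ := hreg.2 1 m le_rfl hm (LinearMap.mem_ker.mpr hVe)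
    refine ⟨blockIn H d 1 m α g, ?_⟩
    have := congrFun (congrArg (fun (v : Hn H d 1) (β : Word d 1) => v β) hg) α
    simp only at this
    exact (ampV_apply' d 1 m (Vtilde H V m) g α).symm.trans this
  -- conclude e = 0
  have he0 : e = 0 := by
    have hsym4 := ContinuousLinearMap.isSelfAdjoint_iff_isSymmetric.mp mp4
    have hinner : ⟪e, e⟫_ℂ = 0 := by
      have t1 : ⟪x, e⟫_ℂ = 0 := by
        rw [PiLp.inner_apply]
        exact Finset.sum_eq_zero fun α _ => hxi α (e α) (heR α)
      have t2 : ⟪Vdag (Vtilde H V 1 x), e⟫_ℂ = 0 := by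
        have h1 : ⟪Vdag (Vtilde H V 1 x), e⟫_ℂ = ⟪x, Vdag (Vtilde H V 1 e)⟫_ℂ := hsym4 x e
        rw [h1, hVe, map_zero]
        exact inner_zero_right x
      calc ⟪e, e⟫_ℂ = ⟪x - Vdag (Vtilde H V 1 x), e⟫_ℂ := by rw [← he]
        _ = ⟪x, e⟫_ℂ - ⟪Vdag (Vtilde H V 1 x), e⟫_ℂ := inner_sub_left _ _ _
        _ = 0 := by rw [t1, t2, sub_zero]
    exact inner_self_eq_zero.mp hinner
  have hxeq : x = Vdag (Vtilde H V 1 x) := by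
    have := sub_eq_zero.mp he0
    exact this
  exact ⟨Vtilde H V 1 x, hxeq.symm⟩
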